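/- If G is a periodic group that is either abelian or a hamiltonian 2-group, then S_*(ZG) is a subgroup of U(ZG). -/

import Mathlib

/-- The canonical involution on the group ring `K[G]`, sending `∑ a_g g` to `∑ a_g g⁻¹`. -/
noncomputable def gstar {K G : Type*} [CommRing K] [Group G] (x : MonoidAlgebra K G) :
    MonoidAlgebra K G := MonoidAlgebra.ofCoeff (Finsupp.mapDomain (fun g => g⁻¹) x.coeff)

section GP
variable {G : Type*} [Group G]

variable {G : Type*} [Group G]

lemma conj_exists (hn : ∀ H : Subgroup G, H.Normal) (hper : ∀ g : G, IsOfFinOrder g)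
    (a b : G) : ∃ k : ℕ, b⁻¹ * a * b = a ^ k := by
  have h1 : b⁻¹ * a * b ∈ Subgroup.zpowers a := by
    have := (hn (Subgroup.zpowers a)).conj_mem a (Subgroup.mem_zpowers a) b⁻¹
    simpa using this
  obtain ⟨k, hk⟩ := Subgroup.mem_zpowers_iff.mp h1
  have hpos : 0 < (orderOf a : ℤ) := by
    exact_mod_cast (hper a).orderOf_pos
  refine ⟨(k % (orderOf a : ℤ)).toNat, ?_⟩
  have h2 : a ^ ((k % (orderOf a : ℤ)).toNat : ℤ) = a ^ k := by
    rw [Int.toNat_of_nonneg (Int.emod_nonneg k (by omega))]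
    exact zpow_mod_orderOf a k
  rw [← hk, ← h2, zpow_natCast]

lemma order_two_pow (h2 : ∀ g : G, ∃ m : ℕ, g ^ (2 ^ m) = 1) (g : G) :
    ∃ e : ℕ, orderOf g = 2 ^ e := by
  obtain ⟨m, hm⟩ := h2 g
  have := orderOf_dvd_of_pow_eq_one hm
  obtain ⟨e, -, he⟩ := (Nat.dvd_prime_pow Nat.prime_two).mp this
  exact ⟨e, he⟩

lemma central_of_sq (hn : ∀ H : Subgroup G, H.Normal) (hper : ∀ g : G, IsOfFinOrder g)
    {z : G} (hz : z * z = 1) (t : G) : z * t = t * z := by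
  obtain ⟨k, hk⟩ := conj_exists hn hper z t
  rcases Nat.even_or_odd k with hev | hod
  · obtain ⟨s, hs⟩ := hev
    have : z ^ k = 1 := by
      rw [hs, ← two_mul, pow_mul, pow_two, hz, one_pow]
    rw [this] at hk
    have hz1 : z = 1 := by
      have := hk
      group at this
      -- t⁻¹ * z * t = 1 → z = 1
      have h3 : z = t * 1 * t⁻¹ := by rw [← hk]; group
      simpa using h3
    simp [hz1]
  · obtain ⟨s, hs⟩ := hod
    have : z ^ k = z := by
      rw [hs, pow_add, pow_mul, pow_two, hz, one_pow, one_mul, pow_one]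
    rw [this] at hk
    -- t⁻¹ * z * t = z
    have : z * t = t * z := by
      have h3 : t * (t⁻¹ * z * t) = t * z := by rw [hk]
      calc z * t = t * (t⁻¹ * z * t) := by group
        _ = t * z := h3
    exact this

lemma pow_odd_of_sq_one {w : G} (hw : w * w = 1) {t : ℕ} (ht : Odd t) : w ^ t = w := by
  obtain ⟨s, hs⟩ := ht
  rw [hs, pow_add, pow_mul, pow_two, hw, one_pow, one_mul, pow_one]

lemma pow_even_of_sq_one {w : G} (hw : w * w = 1) {t : ℕ} (ht : Even t) : w ^ t = 1 := by
  obtain ⟨s, hs⟩ := ht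
  rw [hs, ← two_mul, pow_mul, pow_two, hw, one_pow]

lemma eq_invol {g c : G} (hfin : IsOfFinOrder g) {γ k : ℕ}
    (hγ : orderOf g = 2 ^ γ) (hck : c = g ^ k) (hc2 : orderOf c = 2) :
    c = g ^ (2 ^ (γ - 1)) := by
  have hγ1 : 1 ≤ γ := by
    by_contra hcon
    interval_cases γ
    · have : g = 1 := orderOf_eq_one_iff.mp (by simpa using hγ)
      rw [this] at hck; simp at hck
      rw [hck] at hc2; simp at hc2
  have hord : orderOf (g ^ k) = 2 ^ γ / Nat.gcd (2 ^ γ) k := by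
    rw [IsOfFinOrder.orderOf_pow g k hfin, hγ]
  rw [← hck, hc2] at hord
  have hgcd_dvd : Nat.gcd (2 ^ γ) k ∣ 2 ^ γ := Nat.gcd_dvd_left _ _
  have hmul : 2 * Nat.gcd (2 ^ γ) k = 2 ^ γ := by
    have hd := Nat.div_mul_cancel hgcd_dvd
    rw [← hord] at hd
    exact hd
  have hgcd : Nat.gcd (2 ^ γ) k = 2 ^ (γ - 1) := by
    have h2 : 2 * 2 ^ (γ - 1) = 2 ^ γ := by
      rw [← pow_succ']
      congr 1; omega
    omega
  have hdvd : 2 ^ (γ - 1) ∣ k := hgcd ▸ Nat.gcd_dvd_right (2 ^ γ) k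
  obtain ⟨t, ht⟩ := hdvd
  have hw : g ^ (2 ^ (γ - 1)) * g ^ (2 ^ (γ - 1)) = 1 := by
    rw [← pow_add]
    have he : 2 ^ (γ - 1) + 2 ^ (γ - 1) = 2 ^ γ := by
      have : 2 * 2 ^ (γ - 1) = 2 ^ γ := by rw [← pow_succ']; congr 1; omega
      omega
    rw [he, ← hγ]
    exact pow_orderOf_eq_one g
  have hct : c = (g ^ (2 ^ (γ - 1))) ^ t := by rw [hck, ht, pow_mul]
  rcases Nat.even_or_odd t with hev | hod
  · exfalso
    rw [pow_even_of_sq_one hw hev] at hct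
    rw [hct] at hc2
    simp at hc2
  · rw [hct, pow_odd_of_sq_one hw hod]


lemma kill (hn : ∀ H : Subgroup G, H.Normal) (hper : ∀ g : G, IsOfFinOrder g)
    (a b c : G) (α β : ℕ)
    (hordA : orderOf a = 2 ^ α) (hordB : orderOf b = 2 ^ β)
    (hcA : c = a ^ (2 ^ (α - 1))) (hcB : c = b ^ (2 ^ (β - 1)))
    (hc1 : c ≠ 1) (hc2 : c * c = 1)
    (hkey : a * b = b * a * c)
    (hβ2 : 2 ≤ β) (hβα : β ≤ α) (hα3 : 3 ≤ α)
    (IH : ∀ u : G, orderOf u < 2 ^ β → a * u ≠ u * a → orderOf a = 4) : False := by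
  have hca : Commute a c := by rw [hcA]; exact (Commute.refl a).pow_right _
  have hcb : Commute b c := by rw [hcB]; exact (Commute.refl b).pow_right _
  -- ∀ t, a^t * b = b * a^t * c^t
  have habc : ∀ t : ℕ, a ^ t * b = b * a ^ t * c ^ t := by
    intro t
    induction t with
    | zero => simp
    | succ t ihm =>
      calc a ^ (t + 1) * b = a * (a ^ t * b) := by rw [pow_succ']; group
        _ = a * (b * a ^ t * c ^ t) := by rw [ihm]
        _ = (a * b) * a ^ t * c ^ t := by group
        _ = (b * a * c) * a ^ t * c ^ t := by rw [hkey]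
        _ = b * a * (c * a ^ t) * c ^ t := by group
        _ = b * a * (a ^ t * c) * c ^ t := by rw [(hca.symm.pow_right t).eq]
        _ = b * a ^ (t + 1) * c ^ (t + 1) := by rw [pow_succ', pow_succ']; group
  -- a commutes with b*b
  have hab2 : Commute a (b * b) := by
    have h1 : a * b = b * a * c := hkey
    have : a * (b * b) = b * b * a := by
      calc a * (b * b) = (a * b) * b := by group
        _ = (b * a * c) * b := by rw [hkey]
        _ = b * a * (c * b) := by group
        _ = b * a * (b * c) := by rw [hcb.symm.eq]
        _ = b * (a * b) * c := by group
        _ = b * (b * a * c) * c := by rw [hkey]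
        _ = b * b * a * (c * c) := by group
        _ = b * b * a := by rw [hc2]; group
    exact this
  have hcinv : c⁻¹ = c := inv_eq_of_mul_eq_one_right hc2
  set x : ℕ := 2 ^ (α - β) * (2 ^ β - 1) with hxdef
  set k : ℕ := 2 ^ (β - 2) with hkdef
  have hk2 : (2:ℕ) * k = 2 ^ (β - 1) := by rw [hkdef, ← pow_succ']; congr 1; omega
  have hfold1 : (2:ℕ) ^ (α - β) * 2 ^ (β - 1) = 2 ^ (α - 1) := by
    rw [← pow_add]; congr 1; omega
  have hfold2 : (2:ℕ) ^ (α - β) * 2 ^ (β - 2) = 2 ^ (α - 2) := by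
    rw [← pow_add]; congr 1; omega
  have hpowβ : (2:ℕ) * 2 ^ (β - 1) = 2 ^ β := by rw [← pow_succ']; congr 1; omega
  set A : G := a ^ x with hAdef
  have hAb : A * b = b * A * c ^ x := habc x
  have hc2x : c ^ x * c ^ x = 1 := by
    rw [← pow_add]; exact pow_even_of_sq_one hc2 ⟨x, rfl⟩
  have hcxinv : (c ^ x)⁻¹ = c ^ x := inv_eq_of_mul_eq_one_right hc2x
  have hcxb : c ^ x * b = b * c ^ x := (hcb.pow_right x).symm.eq
  have hbA : b * A = A * b * c ^ x := by
    calc b * A = (A * b) * (c ^ x)⁻¹ := by rw [hAb]; group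
      _ = A * b * c ^ x := by rw [hcxinv]
  set u : G := A * b with hudef
  have hu2 : u * u = (A * A) * (b * b) * c ^ x := by
    calc u * u = A * (b * A) * b := by rw [hudef]; group
      _ = A * (A * b * c ^ x) * b := by rw [hbA]
      _ = A * A * b * (c ^ x * b) := by group
      _ = A * A * b * (b * c ^ x) := by rw [hcxb]
      _ = (A * A) * (b * b) * c ^ x := by group
  -- commutation for power expansion
  have hPQ : Commute (A * A) (b * b) := by
    have h1 : Commute A (b * b) := by rw [hAdef]; exact hab2.pow_left x
    exact h1.mul_left h1
  have hPR : Commute (A * A) (c ^ x) := by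
    have h1 : Commute A (c ^ x) := by rw [hAdef]; exact (hca.pow_pow x x)
    exact h1.mul_left h1
  have hQR : Commute (b * b) (c ^ x) := by
    have h1 : Commute b (c ^ x) := hcb.pow_right x
    exact h1.mul_left h1
  have hexp : (u * u) ^ k = (A * A) ^ k * (b * b) ^ k * (c ^ x) ^ k := by
    rw [hu2, Commute.mul_pow (Commute.mul_left hPR hQR), Commute.mul_pow hPQ]
  have hodd : Odd (2 ^ β - 1) := by
    refine ⟨2 ^ (β - 1) - 1, ?_⟩
    have h1 : (1:ℕ) ≤ 2 ^ (β - 1) := Nat.one_le_two_pow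
    omega
  have hE1 : (A * A) ^ k = c := by
    have earith : (x + x) * k = 2 ^ (α - 1) * (2 ^ β - 1) := by
      calc (x + x) * k = (2 * k) * x := by ring
        _ = 2 ^ (β - 1) * (2 ^ (α - β) * (2 ^ β - 1)) := by rw [hk2, hxdef]
        _ = (2 ^ (α - β) * 2 ^ (β - 1)) * (2 ^ β - 1) := by ring
        _ = 2 ^ (α - 1) * (2 ^ β - 1) := by rw [hfold1]
    rw [hAdef, ← pow_add, ← pow_mul, earith, pow_mul, ← hcA]
    exact pow_odd_of_sq_one hc2 hodd
  have hE2 : (b * b) ^ k = c := by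
    rw [← pow_two, ← pow_mul, hk2, ← hcB]
  have hE3 : (c ^ x) ^ k = 1 := by
    rw [← pow_mul]
    apply pow_even_of_sq_one hc2
    have exk : x * k = 2 ^ (α - 2) * (2 ^ β - 1) := by
      calc x * k = (2 ^ (α - β) * 2 ^ (β - 2)) * (2 ^ β - 1) := by rw [hxdef, hkdef]; ring
        _ = 2 ^ (α - 2) * (2 ^ β - 1) := by rw [hfold2]
    rw [exk]
    have h2 : (2:ℕ) ^ (α - 2) = 2 * 2 ^ (α - 3) := by rw [← pow_succ']; congr 1; omega
    exact ⟨2 ^ (α - 3) * (2 ^ β - 1), by rw [h2]; ring⟩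
  have huord : u ^ (2 ^ (β - 1)) = 1 := by
    calc u ^ (2 ^ (β - 1)) = (u ^ 2) ^ k := by rw [← pow_mul, hk2]
      _ = (u * u) ^ k := by rw [pow_two]
      _ = c * c * 1 := by rw [hexp, hE1, hE2, hE3]
      _ = 1 := by rw [mul_one, hc2]
  have hNCau : a * u ≠ u * a := by
    intro heq
    have hba : b * a = a * b * c := by
      calc b * a = (a * b) * c⁻¹ := by rw [hkey]; group
        _ = a * b * c := by rw [hcinv]
    have haA : a * A = A * a := by rw [hAdef]; exact ((Commute.refl a).pow_right x).eq
    have h1 : u * a = (a * u) * c := by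
      calc u * a = A * (b * a) := by rw [hudef]; group
        _ = A * (a * b * c) := by rw [hba]
        _ = (A * a) * b * c := by group
        _ = (a * A) * b * c := by rw [haA]
        _ = (a * u) * c := by rw [hudef]; group
    rw [heq] at h1
    have h2 : (u * a) * 1 = (u * a) * c := by rw [mul_one]; exact h1
    exact hc1 (mul_left_cancel h2).symm
  by_cases hβ3 : 3 ≤ β
  · have hlt : orderOf u < 2 ^ β := by
      have hdvd := orderOf_dvd_of_pow_eq_one huord
      have hle := Nat.le_of_dvd (by positivity) hdvd
      have hlt2 : (2:ℕ) ^ (β - 1) < 2 ^ β := Nat.pow_lt_pow_right one_lt_two (by omega)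
      omega
    have h4 := IH u hlt hNCau
    rw [hordA] at h4
    have h8 : (8:ℕ) ≤ 2 ^ α := by
      calc (8:ℕ) = 2 ^ 3 := by norm_num
        _ ≤ 2 ^ α := Nat.pow_le_pow_right (by norm_num) hα3
    rw [h4] at h8
    norm_num at h8
  · have hβeq : β = 2 := by omega
    have hu1 : u * u = 1 := by
      have h5 : (2:ℕ) ^ (β - 1) = 2 := by rw [hβeq]; norm_num
      rw [h5, pow_two] at huord
      exact huord
    exact hNCau ((central_of_sq hn hper hu1 a).symm)


lemma double_le (hper : ∀ g : G, IsOfFinOrder g) {g w : G} {γ e t : ℕ}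
    (hg : orderOf g = 2 ^ γ) (hw : w = g ^ t) (he : orderOf w = 2 ^ e)
    (he1 : 1 ≤ e) (hwt : w ^ t = 1) : 2 * e ≤ γ := by
  have ht0 : t ≠ 0 := by
    intro h
    rw [h, pow_zero] at hw
    rw [hw] at he
    simp at he
    have : (2:ℕ)^e ≥ 2 := by
      calc (2:ℕ) = 2^1 := by norm_num
        _ ≤ 2^e := Nat.pow_le_pow_right (by norm_num) he1
    omega
  have heγ : e ≤ γ := by
    have h1 : w ^ (2 ^ γ) = 1 := by
      rw [hw, ← pow_mul, mul_comm, pow_mul, ← hg, pow_orderOf_eq_one, one_pow]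
    have h2 := orderOf_dvd_of_pow_eq_one h1
    rw [he] at h2
    exact (Nat.pow_dvd_pow_iff_le_right one_lt_two).mp h2
  have hord : orderOf (g ^ t) = 2 ^ γ / Nat.gcd (2 ^ γ) t := by
    rw [IsOfFinOrder.orderOf_pow g t (hper g), hg]
  rw [← hw, he] at hord
  have hgcd_dvd : Nat.gcd (2 ^ γ) t ∣ 2 ^ γ := Nat.gcd_dvd_left _ _
  have hmul : 2 ^ e * Nat.gcd (2 ^ γ) t = 2 ^ γ := by
    have hd := Nat.div_mul_cancel hgcd_dvd
    rw [← hord] at hd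
    exact hd
  have hgcd : Nat.gcd (2 ^ γ) t = 2 ^ (γ - e) := by
    have h2 : 2 ^ e * 2 ^ (γ - e) = 2 ^ γ := by rw [← pow_add]; congr 1; omega
    have h3 : 0 < 2 ^ e := by positivity
    exact Nat.eq_of_mul_eq_mul_left h3 (by omega)
  have hedvd : (2:ℕ) ^ e ∣ t := by
    have := orderOf_dvd_of_pow_eq_one hwt
    rw [he] at this
    exact this
  have h4 : (2:ℕ) ^ e ∣ 2 ^ (γ - e) := by
    rw [← hgcd]
    exact Nat.dvd_gcd (pow_dvd_pow 2 heγ) hedvd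
  have h5 : e ≤ γ - e := (Nat.pow_dvd_pow_iff_le_right one_lt_two).mp h4
  omega

theorem hamkey (hn : ∀ H : Subgroup G, H.Normal) (hper : ∀ g : G, IsOfFinOrder g)
    (h2 : ∀ g : G, ∃ m : ℕ, g ^ (2 ^ m) = 1) :
    ∀ N, ∀ a b : G, orderOf a + orderOf b ≤ N → a * b ≠ b * a →
      orderOf a = 4 ∧ b⁻¹ * a * b = a⁻¹ := by
  intro N
  induction N using Nat.strong_induction_on with
  | _ N IHN =>
  intro a b hsum hnc
  obtain ⟨kk, hkk⟩ := conj_exists hn hper a b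
  set c := a⁻¹ * (b⁻¹ * a * b) with hcdef
  have hconj : b⁻¹ * a * b = a * c := by rw [hcdef]; group
  have hc1 : c ≠ 1 := by
    intro hcc
    rw [hcc, mul_one] at hconj
    apply hnc
    calc a * b = b * (b⁻¹ * a * b) := by group
      _ = b * a := by rw [hconj]
  have hordApos : 0 < orderOf a := (hper a).orderOf_pos
  have hordBpos : 0 < orderOf b := (hper b).orderOf_pos
  have hainv : a⁻¹ = a ^ (orderOf a - 1) := by
    have h1 : a ^ (orderOf a - 1) * a = 1 := by
      rw [← pow_succ]
      have he : orderOf a - 1 + 1 = orderOf a := by omega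
      rw [he]; exact pow_orderOf_eq_one a
    exact (eq_inv_of_mul_eq_one_left h1).symm
  have hbinv : b⁻¹ = b ^ (orderOf b - 1) := by
    have h1 : b ^ (orderOf b - 1) * b = 1 := by
      rw [← pow_succ]
      have he : orderOf b - 1 + 1 = orderOf b := by omega
      rw [he]; exact pow_orderOf_eq_one b
    exact (eq_inv_of_mul_eq_one_left h1).symm
  set σ := kk + (orderOf a - 1) with hσdef
  have hcσ : c = a ^ σ := by
    rw [hcdef, hkk, hσdef, pow_add, ← hainv]
    group
  obtain ⟨jj, hjj⟩ := conj_exists hn hper b a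
  set τ := jj * (orderOf b - 1) + 1 with hτdef
  have hcτ : c = b ^ τ := by
    have h1 : a⁻¹ * b⁻¹ * a = (b ^ jj)⁻¹ := by rw [← hjj]; group
    have h2 : c = (b ^ jj)⁻¹ * b := by rw [hcdef, ← h1]; group
    have h3 : (b ^ jj)⁻¹ = b ^ (jj * (orderOf b - 1)) := by
      rw [← inv_pow, hbinv, ← pow_mul, mul_comm (orderOf b - 1) jj]
    rw [h2, h3, hτdef, ← pow_succ]
  have hca : Commute a c := by rw [hcσ]; exact (Commute.refl a).pow_right σ
  have hcb : Commute b c := by rw [hcτ]; exact (Commute.refl b).pow_right τ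
  have hkey : a * b = b * a * c := by
    calc a * b = b * (b⁻¹ * a * b) := by group
      _ = b * (a * c) := by rw [hconj]
      _ = b * a * c := by group
  have hcσ1 : c ^ σ = 1 := by
    have h1 : b⁻¹ * c * b = c := by
      calc b⁻¹ * c * b = b⁻¹ * (c * b) := by group
        _ = b⁻¹ * (b * c) := by rw [hcb.symm.eq]
        _ = c := by group
    have h3 : (b⁻¹ * a * b) ^ σ = b⁻¹ * a ^ σ * b := by
      simpa [inv_inv] using (conj_pow (a := b⁻¹) (b := a) (i := σ))
    have h2 : b⁻¹ * c * b = c * c ^ σ := by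
      calc b⁻¹ * c * b = b⁻¹ * a ^ σ * b := by rw [hcσ]
        _ = (b⁻¹ * a * b) ^ σ := h3.symm
        _ = (a * c) ^ σ := by rw [hconj]
        _ = a ^ σ * c ^ σ := hca.mul_pow σ
        _ = c * c ^ σ := by rw [← hcσ]
    have h4 : c * 1 = c * c ^ σ := by rw [mul_one]; exact h1.symm.trans h2
    exact (mul_left_cancel h4).symm
  have hba : b * a = a * b * c⁻¹ := by rw [hkey]; group
  have hbca : a⁻¹ * b * a = b * c⁻¹ := by
    calc a⁻¹ * b * a = a⁻¹ * (b * a) := by group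
      _ = a⁻¹ * (a * b * c⁻¹) := by rw [hba]
      _ = b * c⁻¹ := by group
  have hcτ1 : c ^ τ = 1 := by
    have h1 : a⁻¹ * c * a = c := by
      calc a⁻¹ * c * a = a⁻¹ * (c * a) := by group
        _ = a⁻¹ * (a * c) := by rw [hca.symm.eq]
        _ = c := by group
    have h3 : (a⁻¹ * b * a) ^ τ = a⁻¹ * b ^ τ * a := by
      simpa [inv_inv] using (conj_pow (a := a⁻¹) (b := b) (i := τ))
    have hcbinv : Commute b c⁻¹ := hcb.inv_right
    have h2 : a⁻¹ * b ^ τ * a = b ^ τ * (c⁻¹) ^ τ := by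
      rw [← h3, hbca, hcbinv.mul_pow]
    have h4 : c = c * (c⁻¹) ^ τ := by
      calc c = a⁻¹ * c * a := h1.symm
        _ = a⁻¹ * b ^ τ * a := by rw [hcτ]
        _ = b ^ τ * (c⁻¹) ^ τ := h2
        _ = c * (c⁻¹) ^ τ := by rw [← hcτ]
    have h5 : c * 1 = c * (c⁻¹) ^ τ := by rw [mul_one]; exact h4
    have h6 : (c⁻¹) ^ τ = 1 := (mul_left_cancel h5).symm
    rw [inv_pow] at h6
    exact inv_eq_one.mp h6
  obtain ⟨α, hordA⟩ := order_two_pow h2 a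
  obtain ⟨β, hordB⟩ := order_two_pow h2 b
  obtain ⟨δ, hordC⟩ := order_two_pow h2 c
  have hδ1 : 1 ≤ δ := by
    by_contra hcon
    apply hc1
    have hδ0 : δ = 0 := by omega
    rw [hδ0] at hordC
    exact orderOf_eq_one_iff.mp (by simpa using hordC)
  have hβδ : 2 * δ ≤ β := double_le hper hordB hcτ hordC hδ1 hcτ1
  have hαδ : 2 * δ ≤ α := double_le hper hordA hcσ hordC hδ1 hcσ1
  have hα2 : 2 ≤ α := by omega
  have hβ2 : 2 ≤ β := by omega
  by_cases hδ2 : 2 ≤ δ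
  · exfalso
    set a1 := a ^ (2 ^ (δ - 1)) with ha1
    have h3 : (b⁻¹ * a * b) ^ (2 ^ (δ - 1)) = b⁻¹ * a ^ (2 ^ (δ - 1)) * b := by
      simpa [inv_inv] using (conj_pow (a := b⁻¹) (b := a) (i := 2 ^ (δ - 1)))
    have hconj1 : b⁻¹ * a1 * b = a1 * c ^ (2 ^ (δ - 1)) := by
      calc b⁻¹ * a1 * b = (b⁻¹ * a * b) ^ (2 ^ (δ - 1)) := by rw [ha1]; exact h3.symm
        _ = (a * c) ^ (2 ^ (δ - 1)) := by rw [hconj]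
        _ = a1 * c ^ (2 ^ (δ - 1)) := by rw [hca.mul_pow, ← ha1]
    have hcpow_ne : c ^ (2 ^ (δ - 1)) ≠ 1 := by
      intro hh
      have hdvd := orderOf_dvd_of_pow_eq_one hh
      rw [hordC] at hdvd
      have hle := Nat.le_of_dvd (by positivity) hdvd
      have hlt2 : (2:ℕ) ^ (δ - 1) < 2 ^ δ := Nat.pow_lt_pow_right one_lt_two (by omega)
      omega
    have hNC1 : b * a1 ≠ a1 * b := by
      intro hh
      apply hcpow_ne
      have h4 : b⁻¹ * a1 * b = a1 := by
        calc b⁻¹ * a1 * b = b⁻¹ * (a1 * b) := by group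
          _ = b⁻¹ * (b * a1) := by rw [hh]
          _ = a1 := by group
      rw [hconj1] at h4
      have h5 : a1 * c ^ (2 ^ (δ - 1)) = a1 * 1 := by rw [mul_one]; exact h4
      exact mul_left_cancel h5
    have horda1 : orderOf a1 = 2 ^ (α - (δ - 1)) := by
      rw [ha1, IsOfFinOrder.orderOf_pow a _ (hper a), hordA]
      have hdd : (2:ℕ) ^ (δ - 1) ∣ 2 ^ α := pow_dvd_pow 2 (by omega)
      rw [Nat.gcd_eq_right hdd]
      rw [Nat.pow_div (by omega) (by norm_num)]
    have hlt : orderOf b + orderOf a1 < N := by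
      have h7 : (2:ℕ) ^ (α - (δ - 1)) < 2 ^ α := Nat.pow_lt_pow_right one_lt_two (by omega)
      rw [hordB, horda1]
      rw [hordA, hordB] at hsum
      omega
    obtain ⟨h4, -⟩ := IHN _ hlt b a1 (le_refl _) hNC1
    rw [hordB] at h4
    have hβeq : β = 2 := Nat.pow_right_injective (le_refl 2) (h4.trans (by norm_num : (4:ℕ) = 2 ^ 2))
    omega
  · have hδeq : δ = 1 := by omega
    have hordC2 : orderOf c = 2 := by rw [hordC, hδeq]; norm_num
    have hc2 : c * c = 1 := by
      have := pow_orderOf_eq_one c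
      rw [hordC2, pow_two] at this
      exact this
    have hcinv : c⁻¹ = c := inv_eq_of_mul_eq_one_right hc2
    have hcA : c = a ^ (2 ^ (α - 1)) := eq_invol (hper a) hordA hcσ hordC2
    have hcB : c = b ^ (2 ^ (β - 1)) := eq_invol (hper b) hordB hcτ hordC2
    have hαeq : α = 2 := by
      by_contra hne
      have hα3 : 3 ≤ α ∨ 3 ≤ β := by
        rcases le_or_gt β α with hh | hh
        · left; omega
        · right; omega
      rcases le_or_gt β α with hβα | hαβ
      · exact kill hn hper a b c α β hordA hordB hcA hcB hc1 hc2 hkey hβ2 hβα (by omega)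
          (fun u hu hnc' => by
            have hlt : orderOf a + orderOf u < N := by
              rw [hordA]
              rw [hordA, hordB] at hsum
              omega
            exact (IHN _ hlt a u (le_refl _) hnc').1)
      · have hkey' : b * a = a * b * c := by rw [hba, hcinv]
        have hα3' : 3 ≤ β := by omega
        exact kill hn hper b a c β α hordB hordA hcB hcA hc1 hc2 hkey' hα2 (le_of_lt hαβ) hα3'
          (fun u hu hnc' => by
            have hlt : orderOf b + orderOf u < N := by
              rw [hordB]
              rw [hordA, hordB] at hsum
              omega
            exact (IHN _ hlt b u (le_refl _) hnc').1)
    constructor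
    · rw [hordA, hαeq]; norm_num
    · have hcA2 : c = a ^ 2 := by
        rw [hcA, hαeq]; norm_num
      have hord4 : orderOf a = 4 := by rw [hordA, hαeq]; norm_num
      have ha4 : a ^ 4 = 1 := by rw [← hord4]; exact pow_orderOf_eq_one a
      rw [hconj, hcA2]
      have h9 : a * a ^ 2 * a = 1 := by
        calc a * a ^ 2 * a = a ^ 4 := by
              rw [show (4:ℕ) = 1 + 2 + 1 from rfl, pow_add, pow_add, pow_one]
          _ = 1 := ha4
      exact eq_inv_of_mul_eq_one_left h9

end GP

section RingPart
variable {K G : Type*} [CommRing K] [Group G]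

lemma gstar_add (x y : MonoidAlgebra K G) : gstar (x + y) = gstar x + gstar y :=
  congrArg MonoidAlgebra.ofCoeff Finsupp.mapDomain_add

lemma gstar_zero : gstar (0 : MonoidAlgebra K G) = 0 := congrArg MonoidAlgebra.ofCoeff Finsupp.mapDomain_zero

lemma gstar_single (a : G) (b : K) :
    gstar (MonoidAlgebra.single a b) = MonoidAlgebra.single a⁻¹ b :=
  congrArg MonoidAlgebra.ofCoeff Finsupp.mapDomain_single

lemma gstar_one : gstar (1 : MonoidAlgebra K G) = 1 := by
  rw [MonoidAlgebra.one_def, gstar_single, inv_one]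

lemma gstar_mul (x y : MonoidAlgebra K G) : gstar (x * y) = gstar y * gstar x := by
  induction x using MonoidAlgebra.induction_linear with
  | zero => simp [gstar_zero]
  | add f g hf hg => rw [add_mul, gstar_add, gstar_add, hf, hg, mul_add]
  | single a b =>
    induction y using MonoidAlgebra.induction_linear with
    | zero => simp [gstar_zero]
    | add f g hf hg => rw [mul_add, gstar_add, gstar_add, hf, hg, add_mul]
    | single a2 b2 =>
      show gstar (MonoidAlgebra.single a b * MonoidAlgebra.single a2 b2) =
        gstar (MonoidAlgebra.single a2 b2) * gstar (MonoidAlgebra.single a b)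
      rw [MonoidAlgebra.single_mul_single, gstar_single, gstar_single, gstar_single,
        MonoidAlgebra.single_mul_single, mul_inv_rev, mul_comm b b2]

lemma symm_coeff {x : MonoidAlgebra K G} (hx : gstar x = x) (g : G) : x.coeff g⁻¹ = x.coeff g := by
  have h1 : (gstar x).coeff g⁻¹ = x.coeff g := Finsupp.mapDomain_apply inv_injective x.coeff g
  rw [hx] at h1
  exact h1

lemma mul_comm_all {G : Type*} [Group G] (hab : ∀ a b : G, a * b = b * a)
    (x y : MonoidAlgebra ℤ G) : x * y = y * x := by
  induction x using MonoidAlgebra.induction_linear with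
  | zero => simp
  | add f g hf hg => rw [add_mul, mul_add, hf, hg]
  | single a b =>
    induction y using MonoidAlgebra.induction_linear with
    | zero => simp
    | add f g hf hg => rw [add_mul, mul_add, hf, hg]
    | single a2 b2 =>
      show MonoidAlgebra.single a b * MonoidAlgebra.single a2 b2 =
        MonoidAlgebra.single a2 b2 * MonoidAlgebra.single a b
      rw [MonoidAlgebra.single_mul_single, MonoidAlgebra.single_mul_single,
        hab a a2, mul_comm b b2]

lemma mul_comm_of_symm {G : Type*} [Group G]
    (key : ∀ g h : G, g * h ≠ h * g → (g⁻¹ * h = h * g ∧ g * h = h * g⁻¹))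
    (hz : ∀ z : G, z * z = 1 → ∀ t : G, z * t = t * z)
    (x y : MonoidAlgebra ℤ G) (hx : gstar x = x) (hy : gstar y = y) : x * y = y * x := by
  have hxc : ∀ g : G, x.coeff g⁻¹ = x.coeff g := symm_coeff hx
  have hxy : x * y = ∑ p ∈ x.coeff.support ×ˢ y.coeff.support,
      MonoidAlgebra.single (p.1 * p.2) (x.coeff p.1 * y.coeff p.2) := by
    rw [MonoidAlgebra.mul_def, Finset.sum_product]
    rfl
  have hyx : y * x = ∑ p ∈ x.coeff.support ×ˢ y.coeff.support,
      MonoidAlgebra.single (p.2 * p.1) (x.coeff p.1 * y.coeff p.2) := by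
    calc y * x = ∑ h ∈ y.coeff.support, ∑ g ∈ x.coeff.support,
          MonoidAlgebra.single (h * g) (y.coeff h * x.coeff g) := by rw [MonoidAlgebra.mul_def]; rfl
      _ = ∑ g ∈ x.coeff.support, ∑ h ∈ y.coeff.support,
          MonoidAlgebra.single (h * g) (y.coeff h * x.coeff g) := Finset.sum_comm
      _ = ∑ g ∈ x.coeff.support, ∑ h ∈ y.coeff.support,
          MonoidAlgebra.single (h * g) (x.coeff g * y.coeff h) := by
            apply Finset.sum_congr rfl; intro g _
            apply Finset.sum_congr rfl; intro h _
            rw [mul_comm (y.coeff h) (x.coeff g)]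
      _ = ∑ p ∈ x.coeff.support ×ˢ y.coeff.support,
          MonoidAlgebra.single (p.2 * p.1) (x.coeff p.1 * y.coeff p.2) := by
            rw [Finset.sum_product]
  have hsum0 : ∑ p ∈ x.coeff.support ×ˢ y.coeff.support,
      (MonoidAlgebra.single (p.1 * p.2) (x.coeff p.1 * y.coeff p.2)
        - MonoidAlgebra.single (p.2 * p.1) (x.coeff p.1 * y.coeff p.2)) = (0 : MonoidAlgebra ℤ G) := by
    classical
    refine Finset.sum_involution
      (fun p _ => if p.1 * p.2 = p.2 * p.1 then p else (p.1⁻¹, p.2)) ?_ ?_ ?_ ?_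
    · intro p hp
      by_cases hcomm : p.1 * p.2 = p.2 * p.1
      · rw [if_pos hcomm, hcomm]
        simp
      · rw [if_neg hcomm]
        obtain ⟨e1, e2⟩ := key p.1 p.2 hcomm
        show (MonoidAlgebra.single (p.1 * p.2) (x.coeff p.1 * y.coeff p.2)
            - MonoidAlgebra.single (p.2 * p.1) (x.coeff p.1 * y.coeff p.2))
          + (MonoidAlgebra.single (p.1⁻¹ * p.2) (x.coeff p.1⁻¹ * y.coeff p.2)
            - MonoidAlgebra.single (p.2 * p.1⁻¹) (x.coeff p.1⁻¹ * y.coeff p.2)) = 0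
        rw [hxc p.1, e1, ← e2]
        abel
    · intro p hp hfp
      by_cases hcomm : p.1 * p.2 = p.2 * p.1
      · exfalso
        apply hfp
        rw [hcomm]
        simp
      · rw [if_neg hcomm]
        intro heq
        apply hcomm
        have h1 : p.1⁻¹ = p.1 := congrArg Prod.fst heq
        have h2 : p.1 * p.1 = 1 := by
          nth_rewrite 2 [← h1]
          simp
        exact hz p.1 h2 p.2
    · intro p hp
      by_cases hcomm : p.1 * p.2 = p.2 * p.1
      · rw [if_pos hcomm]; exact hp
      · rw [if_neg hcomm]
        rw [Finset.mem_product] at hp ⊢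
        refine ⟨?_, hp.2⟩
        rw [Finsupp.mem_support_iff] at hp ⊢
        show x.coeff (p.1⁻¹) ≠ 0
        rw [hxc p.1]
        exact hp.1
    · intro p hp
      by_cases hcomm : p.1 * p.2 = p.2 * p.1
      · simp only [if_pos hcomm]
      · rw [if_neg hcomm]
        have hnc2 : ¬ ((p.1⁻¹, p.2).1 * (p.1⁻¹, p.2).2 = (p.1⁻¹, p.2).2 * (p.1⁻¹, p.2).1) := by
          show ¬ (p.1⁻¹ * p.2 = p.2 * p.1⁻¹)
          intro heq
          apply hcomm
          calc p.1 * p.2 = p.1 * (p.2 * p.1⁻¹) * p.1 := by group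
            _ = p.1 * (p.1⁻¹ * p.2) * p.1 := by rw [← heq]
            _ = p.2 * p.1 := by group
        rw [if_neg hnc2]
        show (p.1⁻¹⁻¹, p.2) = p
        rw [inv_inv]
  have hfinal : x * y - y * x = 0 := by
    rw [hxy, hyx, ← Finset.sum_sub_distrib]
    exact hsum0
  exact sub_eq_zero.mp hfinal

end RingPart

/-- If G is periodic and either abelian or a hamiltonian 2-group, then the symmetric
units of ℤG form a subgroup of U(ℤG). -/
theorem stmt_14 {G : Type*} [Group G] (hper : ∀ g : G, IsOfFinOrder g)
    (h : (∀ a b : G, a * b = b * a) ∨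
      ((¬ ∀ a b : G, a * b = b * a) ∧ (∀ g : G, ∃ m : ℕ, g ^ (2 ^ m) = 1) ∧
        ∀ H : Subgroup G, H.Normal)) :
    ∃ S : Subgroup (MonoidAlgebra ℤ G)ˣ,
      ∀ u : (MonoidAlgebra ℤ G)ˣ, u ∈ S ↔ gstar (u : MonoidAlgebra ℤ G) = u := by
  have hcomm : ∀ x y : MonoidAlgebra ℤ G, gstar x = x → gstar y = y → x * y = y * x := by
    rcases h with hab | ⟨hnab, h2, hn⟩
    · intro x y _ _
      exact mul_comm_all hab x y
    · intro x y hx hy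
      refine mul_comm_of_symm ?_ ?_ x y hx hy
      · intro g hh hgh
        obtain ⟨ho, hc⟩ := hamkey hn hper h2 (orderOf g + orderOf hh) g hh (le_refl _) hgh
        have e2 : g * hh = hh * g⁻¹ := by
          calc g * hh = hh * (hh⁻¹ * g * hh) := by group
            _ = hh * g⁻¹ := by rw [hc]
        have e1 : g⁻¹ * hh = hh * g := by
          calc g⁻¹ * hh = g⁻¹ * (hh * g⁻¹) * g := by group
            _ = g⁻¹ * (g * hh) * g := by rw [← e2]
            _ = hh * g := by group
        exact ⟨e1, e2⟩
      · intro z hzz t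
        exact central_of_sq hn hper hzz t
  refine ⟨⟨⟨⟨{u : (MonoidAlgebra ℤ G)ˣ | gstar (u : MonoidAlgebra ℤ G) = u}, ?_⟩, ?_⟩, ?_⟩,
    fun u => Iff.rfl⟩
  · -- mul_mem'
    intro u v hu hv
    show gstar ((u * v : (MonoidAlgebra ℤ G)ˣ) : MonoidAlgebra ℤ G)
      = ((u * v : (MonoidAlgebra ℤ G)ˣ) : MonoidAlgebra ℤ G)
    have hu' : gstar (u : MonoidAlgebra ℤ G) = u := hu
    have hv' : gstar (v : MonoidAlgebra ℤ G) = v := hv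
    rw [Units.val_mul, gstar_mul, hu', hv', hcomm _ _ hv' hu']
  · -- one_mem'
    show gstar ((1 : (MonoidAlgebra ℤ G)ˣ) : MonoidAlgebra ℤ G)
      = ((1 : (MonoidAlgebra ℤ G)ˣ) : MonoidAlgebra ℤ G)
    rw [Units.val_one, gstar_one]
  · -- inv_mem'
    intro u hu
    have hu' : gstar (u : MonoidAlgebra ℤ G) = u := hu
    show gstar ((u⁻¹ : (MonoidAlgebra ℤ G)ˣ) : MonoidAlgebra ℤ G)
      = ((u⁻¹ : (MonoidAlgebra ℤ G)ˣ) : MonoidAlgebra ℤ G)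
    have h1 : ((u⁻¹ : (MonoidAlgebra ℤ G)ˣ) : MonoidAlgebra ℤ G) * u = 1 := by
      rw [← Units.val_mul, inv_mul_cancel, Units.val_one]
    have h2 := congrArg gstar h1
    rw [gstar_mul, gstar_one, hu'] at h2
    calc gstar ((u⁻¹ : (MonoidAlgebra ℤ G)ˣ) : MonoidAlgebra ℤ G)
        = ((u⁻¹ : (MonoidAlgebra ℤ G)ˣ) : MonoidAlgebra ℤ G)
          * ((u : MonoidAlgebra ℤ G) * gstar ((u⁻¹ : (MonoidAlgebra ℤ G)ˣ) : MonoidAlgebra ℤ G)) := by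
          rw [← mul_assoc, ← Units.val_mul, inv_mul_cancel, Units.val_one, one_mul]
      _ = ((u⁻¹ : (MonoidAlgebra ℤ G)ˣ) : MonoidAlgebra ℤ G) * 1 := by rw [h2]
      _ = ((u⁻¹ : (MonoidAlgebra ℤ G)ˣ) : MonoidAlgebra ℤ G) := mul_one _
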